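/- arXiv:1612.03814 — 13 statements merged into one kernel-verified Lean document; each statement's English description precedes it below -/
import Mathlib

section
/- Let F : 𝒫(V) → 𝒫(V) and suppose (E1, E2) is an LL-solution of F. Then for every nonempty set Y in the range of F there exists a minimum preimage: a set Y_m ⊆ V with F(Y_m) = Y such that Y_m ⊆ X for every X ⊆ V with F(X) = Y. -/
variable {V : Type*}

/-- The lower approximation of `X` w.r.t. the equivalence relation `E`:
all points whose `E`-class is contained in `X`. -/
def lowerApprox (E : Setoid V) (X : Set V) : Set V := {x | {y | E.r x y} ⊆ X}

/-- The upper approximation of `X` w.r.t. the equivalence relation `E`: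
all points whose `E`-class meets `X`. -/
def upperApprox (E : Setoid V) (X : Set V) : Set V := {x | ({y | E.r x y} ∩ X).Nonempty}

/-- The positive region of `D` with respect to `C`: the union over the
`D`-equivalence classes of their `C`-lower approximations. -/
def posRegion (C D : Setoid V) : Set V := ⋃ x : V, lowerApprox C {y | D.r x y}

/-- `(E1, E2)` is an LL-solution of `F` if `F X = l_{E2}(l_{E1}(X))` for all `X`. -/
def IsLLSolution (E1 E2 : Setoid V) (F : Set V → Set V) : Prop :=
  ∀ X : Set V, F X = lowerApprox E2 (lowerApprox E1 X)

/-- `(E1, E2)` is the unique LL-solution of `F`. -/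
def IsUniqueLLSolution (E1 E2 : Setoid V) (F : Set V → Set V) : Prop :=
  IsLLSolution E1 E2 F ∧
    ∀ E3 E4 : Setoid V, IsLLSolution E3 E4 F → E3 = E1 ∧ E4 = E2

/-- `(E1, E2)` is a UU-solution of `F` if `F X = u_{E2}(u_{E1}(X))` for all `X`. -/
def IsUUSolution (E1 E2 : Setoid V) (F : Set V → Set V) : Prop :=
  ∀ X : Set V, F X = upperApprox E2 (upperApprox E1 X)

/-- `(E1, E2)` is the unique UU-solution of `F`. -/
def IsUniqueUUSolution (E1 E2 : Setoid V) (F : Set V → Set V) : Prop :=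
  IsUUSolution E1 E2 F ∧
    ∀ E3 E4 : Setoid V, IsUUSolution E3 E4 F → E3 = E1 ∧ E4 = E2

/-- `(E1, E2)` is a UL-solution of `F` if `F X = u_{E2}(l_{E1}(X))` for all `X`. -/
def IsULSolution (E1 E2 : Setoid V) (F : Set V → Set V) : Prop :=
  ∀ X : Set V, F X = upperApprox E2 (lowerApprox E1 X)

/-- `(E1, E2)` is the unique UL-solution of `F`. -/
def IsUniqueULSolution (E1 E2 : Setoid V) (F : Set V → Set V) : Prop :=
  IsULSolution E1 E2 F ∧
    ∀ E3 E4 : Setoid V, IsULSolution E3 E4 F → E3 = E1 ∧ E4 = E2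

/-- `(E1, E2)` is an LU-solution of `F` if `F X = l_{E2}(u_{E1}(X))` for all `X`. -/
def IsLUSolution (E1 E2 : Setoid V) (F : Set V → Set V) : Prop :=
  ∀ X : Set V, F X = lowerApprox E2 (upperApprox E1 X)

/-- `(E1, E2)` is the unique LU-solution of `F`. -/
def IsUniqueLUSolution (E1 E2 : Setoid V) (F : Set V → Set V) : Prop :=
  IsLUSolution E1 E2 F ∧
    ∀ E3 E4 : Setoid V, IsLUSolution E3 E4 F → E3 = E1 ∧ E4 = E2

theorem stmt_4 [Fintype V] [Nonempty V] (E1 E2 : Setoid V) (F : Set V → Set V)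
    (hF : IsLLSolution E1 E2 F) (Y : Set V) (hY : Y.Nonempty)
    (hrange : ∃ X : Set V, F X = Y) :
    ∃ Ym : Set V, F Ym = Y ∧ ∀ X : Set V, F X = Y → Ym ⊆ X := by
  have key : ∀ (E : Setoid V) (S : Set (Set V)) (f : Set V → Set V),
      lowerApprox E (⋂ X ∈ S, f X) = ⋂ X ∈ S, lowerApprox E (f X) := by
    intro E S f
    ext x
    simp only [lowerApprox, Set.mem_setOf_eq, Set.subset_iInter_iff, Set.mem_iInter,
      Set.mem_setOf_eq]
  set S : Set (Set V) := {X | F X = Y} with hS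
  obtain ⟨X0, hX0⟩ := hrange
  refine ⟨⋂ X ∈ S, X, ?_, fun X hX => Set.biInter_subset_of_mem hX⟩
  rw [hF, show (⋂ X ∈ S, X) = ⋂ X ∈ S, id X from rfl, key E1 S id, key]
  have : ∀ X ∈ S, lowerApprox E2 (lowerApprox E1 X) = Y := by
    intro X hX; rw [← hF]; exact hX
  ext y
  simp only [Set.mem_iInter]
  constructor
  · intro h; have h2 := h X0 hX0; rwa [show id X0 = X0 from rfl, this X0 hX0] at h2
  · intro hy X hX; rw [show id X = X from rfl, this X hX]; exact hy
end

section
/- Let F : 𝒫(V) → 𝒫(V) and suppose (E1, E2) is an LL-solution of F. Then: (a) for all a, b ∈ V with a E2 b and every set X in the range of F, a ∈ X if and only if b ∈ X; and (b) for all a, b ∈ V with a E1 b, every nonempty Y in the range of F, and every X that is minimal with respect to ⊆ among sets satisfying F(X) = Y, a ∈ X if and only if b ∈ X. -/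
variable {V : Type*}

theorem stmt_5 [Fintype V] [Nonempty V] (E1 E2 : Setoid V) (F : Set V → Set V)
    (hF : IsLLSolution E1 E2 F) :
    (∀ a b : V, E2.r a b → ∀ W : Set V, a ∈ F W ↔ b ∈ F W) ∧
    (∀ a b : V, E1.r a b → ∀ Y X : Set V, Y.Nonempty → F X = Y →
      (∀ X' : Set V, F X' = Y → X' ⊆ X → X' = X) → (a ∈ X ↔ b ∈ X)) := by
  have lsub : ∀ (E : Setoid V) (X : Set V), lowerApprox E X ⊆ X := by
    intro E X x hx
    exact hx (E.refl x)
  have lsat : ∀ (E : Setoid V) (X : Set V) (a b : V), E.r a b →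
      (a ∈ lowerApprox E X ↔ b ∈ lowerApprox E X) := by
    intro E X a b hab
    constructor
    · intro ha y hy
      exact ha (E.trans hab hy)
    · intro hb y hy
      exact hb (E.trans (E.symm hab) hy)
  constructor
  · intro a b hab W
    rw [hF W]
    exact lsat E2 _ a b hab
  · intro a b hab Y X _ hFX hmin
    have hinner : lowerApprox E1 (lowerApprox E1 X) = lowerApprox E1 X := by
      ext x
      constructor
      · intro hx
        exact (hx (E1.refl x))
      · intro hx y hy z hz
        exact hx (E1.trans hy hz)
    have hidem : F (lowerApprox E1 X) = F X := by
      rw [hF, hF, hinner]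
    have hXeq : lowerApprox E1 X = X :=
      hmin _ (hidem.trans hFX) (lsub E1 X)
    rw [← hXeq]
    exact lsat E1 X a b hab
end

section
/- Let F : 𝒫(V) → 𝒫(V), suppose (E1, E2) is an LL-solution of F, and suppose x, y ∈ V satisfy ¬(x E2 y) and u_{E1}([x]_{E2}) = u_{E1}([y]_{E2}). Let H2 be the equivalence relation on V defined by: a H2 b if and only if a E2 b, or both a and b belong to [x]_{E2} ∪ [y]_{E2}. Then (E1, H2) is also an LL-solution of F. -/
variable {V : Type*}

lemma key_aux (E1 E2 : Setoid V) (X : Set V) (x y a b : V)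
    (hu : upperApprox E1 {z | E2.r x z} = upperApprox E1 {z | E2.r y z})
    (ha : ∀ c, E2.r a c → c ∈ lowerApprox E1 X)
    (hxa : E2.r x a) (hyb : E2.r y b) : b ∈ lowerApprox E1 X := by
  have hb_up : b ∈ upperApprox E1 {z | E2.r y z} := ⟨b, E1.refl b, hyb⟩
  rw [← hu] at hb_up
  obtain ⟨c, hbc, hxc⟩ := hb_up
  have hc := ha c (E2.trans (E2.symm hxa) hxc)
  intro z hz
  exact hc (E1.trans (E1.symm hbc) hz)

theorem stmt_6 [Fintype V] [Nonempty V] (E1 E2 H2 : Setoid V) (F : Set V → Set V)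
    (hF : IsLLSolution E1 E2 F) (x y : V) (hxy : ¬ E2.r x y)
    (hu : upperApprox E1 {z | E2.r x z} = upperApprox E1 {z | E2.r y z})
    (hH2 : ∀ a b : V, H2.r a b ↔
      (E2.r a b ∨ ((E2.r x a ∨ E2.r y a) ∧ (E2.r x b ∨ E2.r y b)))) :
    IsLLSolution E1 H2 F := by
  intro X
  rw [hF X]
  ext a
  simp only [lowerApprox, Set.mem_setOf_eq]
  constructor
  · intro ha b hb
    rcases (hH2 a b).1 hb with h | ⟨ha', hb'⟩
    · exact ha h
    · rcases ha' with hxa | hya <;> rcases hb' with hxb | hyb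
      · exact ha (E2.trans (E2.symm hxa) hxb)
      · exact key_aux E1 E2 X x y a b hu ha hxa hyb
      · exact key_aux E1 E2 X y x a b hu.symm ha hya hxb
      · exact ha (E2.trans (E2.symm hya) hyb)
  · intro ha b hb
    exact ha ((hH2 a b).2 (Or.inl hb))
end

section
/- Let F : 𝒫(V) → 𝒫(V), suppose (E1, E2) is an LL-solution of F, and suppose x, y ∈ V satisfy ¬(x E1 y) and u_{E2}([x]_{E1}) = u_{E2}([y]_{E1}). Let H1 be the equivalence relation on V defined by: a H1 b if and only if a E1 b, or both a and b belong to [x]_{E1} ∪ [y]_{E1}. Then (H1, E2) is also an LL-solution of F. -/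
variable {V : Type*}

theorem stmt_7 [Fintype V] [Nonempty V] (E1 E2 H1 : Setoid V) (F : Set V → Set V)
    (hF : IsLLSolution E1 E2 F) (x y : V) (hxy : ¬ E1.r x y)
    (hu : upperApprox E2 {z | E1.r x z} = upperApprox E2 {z | E1.r y z})
    (hH1 : ∀ a b : V, H1.r a b ↔
      (E1.r a b ∨ ((E1.r x a ∨ E1.r y a) ∧ (E1.r x b ∨ E1.r y b)))) :
    IsLLSolution H1 E2 F := by
  intro X
  rw [hF X]
  ext z
  simp only [lowerApprox, Set.mem_setOf_eq]
  constructor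
  · intro h w hzw v hwv
    rcases (hH1 w v).mp hwv with hwv | ⟨hw, hv⟩
    · exact h hzw hwv
    · have hx : z ∈ upperApprox E2 {z' | E1.r x z'} := by
        rcases hw with hw | hw
        · exact ⟨w, hzw, hw⟩
        · rw [hu]; exact ⟨w, hzw, hw⟩
      have hy : z ∈ upperApprox E2 {z' | E1.r y z'} := by rw [← hu]; exact hx
      rcases hv with hv | hv
      · obtain ⟨w', hw', hxw'⟩ := hx
        exact h hw' (E1.iseqv.trans (E1.iseqv.symm hxw') hv)
      · obtain ⟨w', hw', hyw'⟩ := hy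
        exact h hw' (E1.iseqv.trans (E1.iseqv.symm hyw') hv)
  · intro h w hzw v hwv
    exact h hzw ((hH1 w v).mpr (Or.inl hwv))
end

section
/- Let F : 𝒫(V) → 𝒫(V). If F has an LL-solution, then F has an LL-solution (E1, E2) satisfying: (i) for all x, y ∈ V with ¬(x E2 y), u_{E1}([x]_{E2}) ≠ u_{E1}([y]_{E2}); and (ii) for all x, y ∈ V with ¬(x E1 y), u_{E2}([x]_{E1}) ≠ u_{E2}([y]_{E1}). -/
variable {V : Type*}

lemma mem_upper' {E : Setoid V} {Y : Set V} {x : V} :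
    x ∈ upperApprox E Y ↔ ∃ c, E.r x c ∧ c ∈ Y := Iff.rfl

lemma mem_ll' {A B : Setoid V} {X : Set V} {x : V} :
    x ∈ lowerApprox B (lowerApprox A X) ↔ upperApprox A {z | B.r x z} ⊆ X := by
  constructor
  · intro h w hw
    obtain ⟨c, hc1, hc2⟩ := mem_upper'.1 hw
    exact h hc2 (A.symm hc1)
  · intro h y hy z hz
    exact h (mem_upper'.2 ⟨y, A.symm hz, hy⟩)

lemma ll_char (A B : Setoid V) (X : Set V) :
    lowerApprox B (lowerApprox A X) = {x | upperApprox A {z | B.r x z} ⊆ X} := by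
  ext x; exact mem_ll'

theorem stmt_8 [Fintype V] [Nonempty V] (F : Set V → Set V)
    (h : ∃ E1 E2 : Setoid V, IsLLSolution E1 E2 F) :
    ∃ E1 E2 : Setoid V, IsLLSolution E1 E2 F ∧
      (∀ x y : V, ¬ E2.r x y →
        upperApprox E1 {z | E2.r x z} ≠ upperApprox E1 {z | E2.r y z}) ∧
      (∀ x y : V, ¬ E1.r x y →
        upperApprox E2 {z | E1.r x z} ≠ upperApprox E2 {z | E1.r y z}) := by
  obtain ⟨E1, E2, hLL⟩ := h
  set S : V → Set V := fun x => upperApprox E1 {z | E2.r x z} with hS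
  set E2' : Setoid V := Setoid.ker S with hE2'
  have hE2'r : ∀ x y, E2'.r x y ↔ S x = S y := fun x y => Iff.rfl
  set T : V → Set V := fun a => upperApprox E2' {z | E1.r a z} with hT
  set E1' : Setoid V := Setoid.ker T with hE1'
  have hE1'r : ∀ x y, E1'.r x y ↔ T x = T y := fun x y => Iff.rfl
  -- E2 refines E2'
  have hE2sub : ∀ x y, E2.r x y → E2'.r x y := by
    intro x y hxy
    refine (hE2'r x y).2 ?_
    have : {z | E2.r x z} = {z | E2.r y z} := by
      ext z; exact ⟨fun h => E2.trans (E2.symm hxy) h, fun h => E2.trans hxy h⟩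
    simp only [hS, this]
  -- E1 refines E1'
  have hE1sub : ∀ x y, E1.r x y → E1'.r x y := by
    intro x y hxy
    refine (hE1'r x y).2 ?_
    have : {z | E1.r x z} = {z | E1.r y z} := by
      ext z; exact ⟨fun h => E1.trans (E1.symm hxy) h, fun h => E1.trans hxy h⟩
    simp only [hT, this]
  -- key1 : u_{E1}([x]_{E2'}) = S x
  have key1 : ∀ x, upperApprox E1 {z | E2'.r x z} = S x := by
    intro x
    apply Set.Subset.antisymm
    · rintro w ⟨c, hc1, hc2⟩
      have hSc : S x = S c := (hE2'r x c).1 hc2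
      rw [hSc]
      exact mem_upper'.2 ⟨c, hc1, E2.refl c⟩
    · rintro w ⟨c, hc1, hc2⟩
      exact mem_upper'.2 ⟨c, hc1, hE2sub x c hc2⟩
  -- key2 : u_{E1'}([x]_{E2'}) = S x
  have key2 : ∀ x, upperApprox E1' {z | E2'.r x z} = S x := by
    intro x
    apply Set.Subset.antisymm
    · rintro a ⟨b, hab, hxb⟩
      have hTab : T a = T b := (hE1'r a b).1 hab
      have hxTb : x ∈ T b := mem_upper'.2 ⟨b, hxb, E1.refl b⟩
      have hxTa : x ∈ T a := by rw [hTab]; exact hxTb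
      obtain ⟨c, hc1, hc2⟩ := mem_upper'.1 hxTa
      rw [← key1 x]
      exact mem_upper'.2 ⟨c, hc2, hc1⟩
    · rintro w hw
      rw [← key1 x] at hw
      obtain ⟨c, hc1, hc2⟩ := mem_upper'.1 hw
      exact mem_upper'.2 ⟨c, hE1sub w c hc1, hc2⟩
  -- key3 : u_{E2'}([a]_{E1'}) = T a
  have key3 : ∀ a, upperApprox E2' {z | E1'.r a z} = T a := by
    intro a
    apply Set.Subset.antisymm
    · rintro z ⟨w, hzw, haw⟩
      have hTaw : T a = T w := (hE1'r a w).1 haw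
      have : z ∈ T w := mem_upper'.2 ⟨w, hzw, E1.refl w⟩
      rw [hTaw]; exact this
    · rintro z hz
      obtain ⟨c, hc1, hc2⟩ := mem_upper'.1 hz
      exact mem_upper'.2 ⟨c, hc1, hE1sub a c hc2⟩
  refine ⟨E1', E2', ?_, ?_, ?_⟩
  · intro X
    rw [hLL X, ll_char, ll_char]
    ext x
    simp only [Set.mem_setOf_eq, key2 x]
    exact Iff.rfl
  · intro x y hxy hcontra
    exact hxy ((hE2'r x y).2 (by rw [← key2 x, ← key2 y, hcontra]))
  · intro x y hxy hcontra
    exact hxy ((hE1'r x y).2 (by rw [← key3 x, ← key3 y, hcontra]))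
end

section
/- Let E1 and E2 be equivalence relations on V and suppose (E1, E2) is the unique LL-solution of the operator F = l_{E2} ∘ l_{E1}. Then the number of equivalence classes of E1 is strictly less than 2 raised to the number of equivalence classes of E2, and the number of equivalence classes of E2 is strictly less than 2 raised to the number of equivalence classes of E1. -/
variable {V : Type*}

def mergeSetoid (E : Setoid V) (x y : V) : Setoid V where
  r a b := E.r a b ∨ (E.r a x ∧ E.r b y) ∨ (E.r a y ∧ E.r b x)
  iseqv := by
    constructor
    · intro a; exact Or.inl (E.refl a)
    · rintro a b (hab | ⟨h1, h2⟩ | ⟨h1, h2⟩)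
      · exact Or.inl (E.symm hab)
      · exact Or.inr (Or.inr ⟨h2, h1⟩)
      · exact Or.inr (Or.inl ⟨h2, h1⟩)
    · rintro a b c (hab | ⟨h1, h2⟩ | ⟨h1, h2⟩) (hbc | ⟨g1, g2⟩ | ⟨g1, g2⟩)
      · exact Or.inl (E.trans hab hbc)
      · exact Or.inr (Or.inl ⟨E.trans hab g1, g2⟩)
      · exact Or.inr (Or.inr ⟨E.trans hab g1, g2⟩)
      · exact Or.inr (Or.inl ⟨h1, E.trans (E.symm hbc) h2⟩)
      · exact Or.inl (E.trans (E.trans h1 (E.symm g1)) (E.trans h2 (E.symm g2)))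
      · exact Or.inl (E.trans h1 (E.symm g2))
      · exact Or.inr (Or.inr ⟨h1, E.trans (E.symm hbc) h2⟩)
      · exact Or.inl (E.trans h1 (E.symm g2))
      · exact Or.inl (E.trans (E.trans h1 (E.symm g1)) (E.trans h2 (E.symm g2)))

lemma mergeSetoid_r (E : Setoid V) (x y : V) : (mergeSetoid E x y).r x y :=
  Or.inr (Or.inl ⟨E.refl x, E.refl y⟩)

lemma lowerApprox_mono (E : Setoid V) {X Y : Set V} (h : X ⊆ Y) :
    lowerApprox E X ⊆ lowerApprox E Y := fun _ ha _ hy => h (ha hy)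

lemma LL_merge_inner (E1 E2 : Setoid V) {x x' : V}
    (hsig : ∀ w, (∃ v, E1.r x v ∧ E2.r w v) ↔ (∃ v, E1.r x' v ∧ E2.r w v)) (X : Set V) :
    lowerApprox E2 (lowerApprox (mergeSetoid E1 x x') X)
      = lowerApprox E2 (lowerApprox E1 X) := by
  apply Set.Subset.antisymm
  · refine lowerApprox_mono E2 (fun a ha b hb => ha (Or.inl hb))
  · intro z hz w hzw u hwu
    rcases hwu with hwu | ⟨hwx, hux'⟩ | ⟨hwx', hux⟩
    · exact hz hzw hwu
    · obtain ⟨v, hx'v, hwv⟩ := (hsig w).mp ⟨w, E1.symm hwx, E2.refl w⟩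
      exact hz (E2.trans hzw hwv) (E1.trans (E1.symm hx'v) (E1.symm hux'))
    · obtain ⟨v, hxv, hwv⟩ := (hsig w).mpr ⟨w, E1.symm hwx', E2.refl w⟩
      exact hz (E2.trans hzw hwv) (E1.trans (E1.symm hxv) (E1.symm hux))

lemma LL_merge_outer (E1 E2 : Setoid V) {y y' : V}
    (hsig : ∀ w, (∃ v, E2.r y v ∧ E1.r w v) ↔ (∃ v, E2.r y' v ∧ E1.r w v)) (X : Set V) :
    lowerApprox (mergeSetoid E2 y y') (lowerApprox E1 X)
      = lowerApprox E2 (lowerApprox E1 X) := by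
  apply Set.Subset.antisymm
  · intro z hz w hzw
    exact hz (Or.inl hzw)
  · intro z hz w hzw
    rcases hzw with hzw | ⟨hzy, hwy'⟩ | ⟨hzy', hwy⟩
    · exact hz hzw
    · obtain ⟨v, hyv, hwv⟩ := (hsig w).mpr ⟨w, E2.symm hwy', E1.refl w⟩
      intro b hwb
      exact hz (E2.trans hzy hyv) (E1.trans (E1.symm hwv) hwb)
    · obtain ⟨v, hy'v, hwv⟩ := (hsig w).mp ⟨w, E2.symm hwy, E1.refl w⟩
      intro b hwb
      exact hz (E2.trans hzy' hy'v) (E1.trans (E1.symm hwv) hwb)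

lemma key_inner {E1 E2 : Setoid V}
    (h : IsUniqueLLSolution E1 E2 (fun X => lowerApprox E2 (lowerApprox E1 X)))
    {x x' : V}
    (hsig : ∀ w, (∃ v, E1.r x v ∧ E2.r w v) ↔ (∃ v, E1.r x' v ∧ E2.r w v)) :
    E1.r x x' := by
  have hsol : IsLLSolution (mergeSetoid E1 x x') E2
      (fun X => lowerApprox E2 (lowerApprox E1 X)) :=
    fun X => (LL_merge_inner E1 E2 hsig X).symm
  have heq := (h.2 _ _ hsol).1
  exact heq ▸ mergeSetoid_r E1 x x'

lemma key_outer {E1 E2 : Setoid V}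
    (h : IsUniqueLLSolution E1 E2 (fun X => lowerApprox E2 (lowerApprox E1 X)))
    {y y' : V}
    (hsig : ∀ w, (∃ v, E2.r y v ∧ E1.r w v) ↔ (∃ v, E2.r y' v ∧ E1.r w v)) :
    E2.r y y' := by
  have hsol : IsLLSolution E1 (mergeSetoid E2 y y')
      (fun X => lowerApprox E2 (lowerApprox E1 X)) :=
    fun X => (LL_merge_outer E1 E2 hsig X).symm
  have heq := (h.2 _ _ hsol).2
  exact heq ▸ mergeSetoid_r E2 y y'

/-- Generic counting step. -/
lemma card_lt {A B : Setoid V} [Fintype V] [Nonempty V]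
    (key : ∀ x x' : V, (∀ w, (∃ v, A.r x v ∧ B.r w v) ↔ (∃ v, A.r x' v ∧ B.r w v)) → A.r x x') :
    Nat.card (Quotient A) < 2 ^ Nat.card (Quotient B) := by
  classical
  set f : Quotient A → Finset (Quotient B) := fun q =>
    Finset.univ.filter (fun d => ∃ v, Quotient.mk A v = q ∧ Quotient.mk B v = d) with hf
  have hmem : ∀ (x w : V), Quotient.mk B w ∈ f (Quotient.mk A x) ↔ ∃ v, A.r x v ∧ B.r w v := by
    intro x w
    simp only [hf, Finset.mem_filter, Finset.mem_univ, true_and]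
    constructor
    · rintro ⟨v, h1, h2⟩
      exact ⟨v, A.symm (Quotient.eq.mp h1), B.symm (Quotient.eq.mp h2)⟩
    · rintro ⟨v, h1, h2⟩
      exact ⟨v, Quotient.sound (A.symm h1), Quotient.sound (B.symm h2)⟩
  have hinj : Function.Injective f := by
    intro q q' hqq'
    obtain ⟨x, rfl⟩ := Quotient.exists_rep q
    obtain ⟨x', rfl⟩ := Quotient.exists_rep q'
    refine Quotient.sound (key x x' ?_)
    intro w
    rw [← hmem x w, ← hmem x' w, hqq']
  have hne : (∅ : Finset (Quotient B)) ∉ Set.range f := by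
    rintro ⟨q, hq⟩
    obtain ⟨x, rfl⟩ := Quotient.exists_rep q
    have : Quotient.mk B x ∈ f (Quotient.mk A x) :=
      (hmem x x).mpr ⟨x, A.refl x, B.refl x⟩
    rw [hq] at this
    exact absurd this (Finset.notMem_empty _)
  have hcard := Fintype.card_lt_of_injective_of_notMem f hinj hne
  rw [Fintype.card_finset] at hcard
  simpa [Nat.card_eq_fintype_card] using hcard

theorem stmt_9 [Fintype V] [Nonempty V] (E1 E2 : Setoid V)
    (h : IsUniqueLLSolution E1 E2 (fun X => lowerApprox E2 (lowerApprox E1 X))) :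
    Nat.card (Quotient E1) < 2 ^ Nat.card (Quotient E2) ∧
    Nat.card (Quotient E2) < 2 ^ Nat.card (Quotient E1) := by
  exact ⟨card_lt (fun x x' hs => key_inner h hs),
         card_lt (fun y y' hs => key_outer h hs)⟩
end

section
/- Let E1 and E2 be equivalence relations on V and let F = l_{E2} ∘ l_{E1}, so that (E1, E2) is an LL-solution of F. Then (E1, E2) is the unique LL-solution of F if and only if all of the following hold: (i) for all x, y ∈ V with ¬(x E2 y), u_{E1}([x]_{E2}) ≠ u_{E1}([y]_{E2}); (ii) for all x, y ∈ V with ¬(x E1 y), u_{E2}([x]_{E1}) ≠ u_{E2}([y]_{E1}); (iii) for every x ∈ V there exists z ∈ V such that [x]_{E2} ∩ [z]_{E1} has exactly one element; (iv) for every x ∈ V there exists z ∈ V such that [x]_{E1} ∩ [z]_{E2} has exactly one element. -/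
variable {V : Type*}

namespace Stmt10Aux

lemma cls_eq (E : Setoid V) {x y : V} (h : E.r x y) : {z | E.r x z} = {z | E.r y z} :=
  Set.ext fun z => ⟨fun hz => E.iseqv.trans (E.iseqv.symm h) hz, fun hz => E.iseqv.trans h hz⟩

lemma mem_upper {E : Setoid V} {X : Set V} {z : V} :
    z ∈ upperApprox E X ↔ ∃ y, E.r z y ∧ y ∈ X := by
  constructor
  · rintro ⟨y, hy1, hy2⟩; exact ⟨y, hy1, hy2⟩
  · rintro ⟨y, hy1, hy2⟩; exact ⟨y, hy1, hy2⟩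

lemma mem_LL {E1 E2 : Setoid V} {X : Set V} {x : V} :
    x ∈ lowerApprox E2 (lowerApprox E1 X) ↔ upperApprox E1 {y | E2.r x y} ⊆ X := by
  constructor
  · intro h w hw
    obtain ⟨y, h1, h2⟩ := mem_upper.mp hw
    exact h h2 (E1.iseqv.symm h1)
  · intro h y hy z hz
    exact h (mem_upper.mpr ⟨y, E1.iseqv.symm hz, hy⟩)

lemma transpose {E1 E2 : Setoid V} {x z : V} :
    z ∈ upperApprox E1 {y | E2.r x y} ↔ x ∈ upperApprox E2 {y | E1.r z y} := by
  rw [mem_upper, mem_upper]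
  exact ⟨fun ⟨y, h1, h2⟩ => ⟨y, h2, h1⟩, fun ⟨y, h1, h2⟩ => ⟨y, h2, h1⟩⟩

lemma sol_iff (E1 E2 E3 E4 : Setoid V) :
    IsLLSolution E3 E4 (fun X => lowerApprox E2 (lowerApprox E1 X)) ↔
      ∀ x, upperApprox E3 {y | E4.r x y} = upperApprox E1 {y | E2.r x y} := by
  constructor
  · intro h x
    apply Set.Subset.antisymm
    · have h1 : lowerApprox E2 (lowerApprox E1 (upperApprox E1 {y | E2.r x y}))
          = lowerApprox E4 (lowerApprox E3 (upperApprox E1 {y | E2.r x y})) :=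
        h (upperApprox E1 {y | E2.r x y})
      have hx : x ∈ lowerApprox E2 (lowerApprox E1 (upperApprox E1 {y | E2.r x y})) :=
        mem_LL.mpr subset_rfl
      rw [h1] at hx
      exact mem_LL.mp hx
    · have h1 : lowerApprox E2 (lowerApprox E1 (upperApprox E3 {y | E4.r x y}))
          = lowerApprox E4 (lowerApprox E3 (upperApprox E3 {y | E4.r x y})) :=
        h (upperApprox E3 {y | E4.r x y})
      have hx : x ∈ lowerApprox E4 (lowerApprox E3 (upperApprox E3 {y | E4.r x y})) :=
        mem_LL.mpr subset_rfl
      rw [← h1] at hx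
      exact mem_LL.mp hx
  · intro h X
    ext x
    constructor
    · intro hx
      exact mem_LL.mpr (by rw [h x]; exact mem_LL.mp hx)
    · intro hx
      exact mem_LL.mpr (by rw [← h x]; exact mem_LL.mp hx)

/-- A partial transversal of the `E`-classes inside `C`, assuming every `E`-class meets `C`
in either zero or at least two points. -/
lemma transversal (E : Setoid V) (C : Set V)
    (h2 : ∀ z a, (C ∩ {w | E.r z w}) ≠ ({a} : Set V)) :
    ∃ A : Set V, A ⊆ C ∧
      (∀ a ∈ A, ∀ b ∈ A, E.r a b → a = b) ∧
      (∀ y ∈ C, ∃ a ∈ A, E.r y a) ∧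
      (∀ y ∈ C, ∃ b ∈ C, b ∉ A ∧ E.r y b) := by
  classical
  set g : V → V := fun z =>
    if h : (C ∩ {w | E.r z w}).Nonempty then h.some else z with hg
  have hgmem : ∀ z (h : (C ∩ {w | E.r z w}).Nonempty), g z ∈ C ∩ {w | E.r z w} := by
    intro z h
    simp only [hg, dif_pos h]
    exact h.some_mem
  have hginv : ∀ z z', E.r z z' → (C ∩ {w | E.r z w}).Nonempty → g z = g z' := by
    intro z z' hzz' h
    have hset : (C ∩ {w | E.r z w}) = (C ∩ {w | E.r z' w}) := by rw [cls_eq E hzz']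
    have h' : (C ∩ {w | E.r z' w}).Nonempty := hset ▸ h
    simp only [hg, dif_pos h, dif_pos h']
    revert h'
    rw [← hset]
    intro h'
    rfl
  refine ⟨{w | w ∈ C ∧ g w = w}, fun w hw => hw.1, ?_, ?_, ?_⟩
  · rintro a ⟨haC, haG⟩ b ⟨hbC, hbG⟩ hab
    have hne : (C ∩ {w | E.r a w}).Nonempty := ⟨a, haC, E.iseqv.refl a⟩
    have := hginv a b hab hne
    rw [haG, hbG] at this
    exact this
  · intro y hy
    have hne : (C ∩ {w | E.r y w}).Nonempty := ⟨y, hy, E.iseqv.refl y⟩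
    obtain ⟨hgC, hgr⟩ := hgmem y hne
    have hne' : (C ∩ {w | E.r (g y) w}).Nonempty := ⟨g y, hgC, E.iseqv.refl _⟩
    have hfix : g (g y) = g y := hginv (g y) y (E.iseqv.symm hgr) hne'
    exact ⟨g y, ⟨hgC, hfix⟩, hgr⟩
  · intro y hy
    have hyin : y ∈ C ∩ {w | E.r y w} := ⟨hy, E.iseqv.refl y⟩
    have : ¬ (C ∩ {w | E.r y w}) ⊆ {y} := by
      intro hsub
      exact h2 y y (Set.Subset.antisymm hsub (by rintro w rfl; exact hyin))
    obtain ⟨b, hbmem, hbne⟩ := Set.not_subset.mp this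
    have hbne' : b ≠ y := hbne
    by_cases hbA : b ∈ {w | w ∈ C ∧ g w = w}
    · refine ⟨y, hy, ?_, E.iseqv.refl y⟩
      intro hyA
      have hne : (C ∩ {w | E.r b w}).Nonempty := ⟨b, hbmem.1, E.iseqv.refl b⟩
      have hgb : g b = g y := hginv b y (E.iseqv.symm hbmem.2) hne
      rw [hbA.2, hyA.2] at hgb
      exact hbne' hgb
    · exact ⟨b, hbmem.1, hbA, hbmem.2⟩

/-- Splitting a setoid along a set. -/
def splitSetoid (E : Setoid V) (A : Set V) : Setoid V :=
  ⟨fun a b => E.r a b ∧ (a ∈ A ↔ b ∈ A),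
   ⟨fun a => ⟨E.iseqv.refl a, Iff.rfl⟩,
    fun h => ⟨E.iseqv.symm h.1, h.2.symm⟩,
    fun h h' => ⟨E.iseqv.trans h.1 h'.1, h.2.trans h'.2⟩⟩⟩

/-- Kernel setoid of a map into sets. -/
def kerSetoid (f : V → Set V) : Setoid V :=
  ⟨fun a b => f a = f b, ⟨fun _ => rfl, Eq.symm, Eq.trans⟩⟩

end Stmt10Aux

open Stmt10Aux in
theorem stmt_10 [Fintype V] [Nonempty V] (E1 E2 : Setoid V) :
    IsUniqueLLSolution E1 E2 (fun X => lowerApprox E2 (lowerApprox E1 X)) ↔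
      ((∀ x y : V, ¬ E2.r x y →
          upperApprox E1 {z | E2.r x z} ≠ upperApprox E1 {z | E2.r y z}) ∧
       (∀ x y : V, ¬ E1.r x y →
          upperApprox E2 {z | E1.r x z} ≠ upperApprox E2 {z | E1.r y z}) ∧
       (∀ x : V, ∃ z : V, ∃ a : V, {w | E2.r x w} ∩ {w | E1.r z w} = {a}) ∧
       (∀ x : V, ∃ z : V, ∃ a : V, {w | E1.r x w} ∩ {w | E2.r z w} = {a})) := by
  constructor
  · rintro ⟨-, huniq⟩
    refine ⟨?_, ?_, ?_, ?_⟩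
    · -- condition (i)
      intro x y hxy heq
      set E4' := kerSetoid (fun a => upperApprox E1 {z | E2.r a z}) with hE4'
      have hsol : IsLLSolution E1 E4' (fun X => lowerApprox E2 (lowerApprox E1 X)) := by
        rw [sol_iff]
        intro w
        apply Set.Subset.antisymm
        · intro z hz
          obtain ⟨y', h1, h2⟩ := mem_upper.mp hz
          have h2' : upperApprox E1 {a | E2.r w a} = upperApprox E1 {a | E2.r y' a} := h2
          rw [h2']
          exact mem_upper.mpr ⟨y', h1, E2.iseqv.refl y'⟩
        · intro z hz
          obtain ⟨y', h1, h2⟩ := mem_upper.mp hz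
          refine mem_upper.mpr ⟨y', h1, ?_⟩
          show upperApprox E1 {a | E2.r w a} = upperApprox E1 {a | E2.r y' a}
          rw [cls_eq E2 h2]
      have hE := (huniq E1 E4' hsol).2
      have : E4'.r x y := heq
      rw [hE] at this
      exact hxy this
    · -- condition (ii)
      intro x y hxy heq
      set E3' := kerSetoid (fun a => upperApprox E2 {z | E1.r a z}) with hE3'
      have hsol : IsLLSolution E3' E2 (fun X => lowerApprox E2 (lowerApprox E1 X)) := by
        rw [sol_iff]
        intro w
        apply Set.Subset.antisymm
        · intro z hz
          obtain ⟨y', h1, h2⟩ := mem_upper.mp hz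
          have h1' : upperApprox E2 {a | E1.r z a} = upperApprox E2 {a | E1.r y' a} := h1
          rw [transpose, h1']
          exact mem_upper.mpr ⟨y', h2, E1.iseqv.refl y'⟩
        · intro z hz
          obtain ⟨y', h1, h2⟩ := mem_upper.mp hz
          refine mem_upper.mpr ⟨y', ?_, h2⟩
          show upperApprox E2 {a | E1.r z a} = upperApprox E2 {a | E1.r y' a}
          rw [cls_eq E1 h1]
      have hE := (huniq E3' E2 hsol).1
      have : E3'.r x y := heq
      rw [hE] at this
      exact hxy this
    · -- condition (iii)
      intro x
      by_contra hcon
      push_neg at hcon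
      obtain ⟨A, hAC, hAinj, hAex, hBex⟩ := transversal E1 {w | E2.r x w} hcon
      set E4' := splitSetoid E2 A with hE4'
      have hsol : IsLLSolution E1 E4' (fun X => lowerApprox E2 (lowerApprox E1 X)) := by
        rw [sol_iff]
        intro w
        apply Set.Subset.antisymm
        · intro z hz
          obtain ⟨y', h1, h2⟩ := mem_upper.mp hz
          exact mem_upper.mpr ⟨y', h1, h2.1⟩
        · intro z hz
          obtain ⟨y, hzy, hwy⟩ := mem_upper.mp hz
          by_cases hwC : w ∈ {w | E2.r x w}
          · have hyC : y ∈ {w | E2.r x w} := E2.iseqv.trans hwC hwy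
            by_cases hwA : w ∈ A
            · obtain ⟨a, haA, hya⟩ := hAex y hyC
              refine mem_upper.mpr ⟨a, E1.iseqv.trans hzy hya, ?_, ?_⟩
              · exact E2.iseqv.trans (E2.iseqv.symm hwC) (hAC haA)
              · exact ⟨fun _ => haA, fun _ => hwA⟩
            · obtain ⟨b, hbC, hbA, hyb⟩ := hBex y hyC
              refine mem_upper.mpr ⟨b, E1.iseqv.trans hzy hyb, ?_, ?_⟩
              · exact E2.iseqv.trans (E2.iseqv.symm hwC) hbC
              · exact ⟨fun h => absurd h hwA, fun h => absurd h hbA⟩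
          · refine mem_upper.mpr ⟨y, hzy, hwy, ?_⟩
            have hwA : w ∉ A := fun h => hwC (hAC h)
            have hyA : y ∉ A := fun h => hwC (E2.iseqv.trans (hAC h) (E2.iseqv.symm hwy))
            exact ⟨fun h => absurd h hwA, fun h => absurd h hyA⟩
      have hE := (huniq E1 E4' hsol).2
      have hxC : x ∈ {w | E2.r x w} := E2.iseqv.refl x
      obtain ⟨a, haA, -⟩ := hAex x hxC
      obtain ⟨b, hbC, hbA, -⟩ := hBex x hxC
      have hab : E2.r a b := E2.iseqv.trans (E2.iseqv.symm (hAC haA)) hbC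
      have : E4'.r a b := by rw [hE]; exact hab
      exact hbA (this.2.mp haA)
    · -- condition (iv)
      intro x
      by_contra hcon
      push_neg at hcon
      obtain ⟨A, hAC, hAinj, hAex, hBex⟩ := transversal E2 {w | E1.r x w} hcon
      set E3' := splitSetoid E1 A with hE3'
      have hsol : IsLLSolution E3' E2 (fun X => lowerApprox E2 (lowerApprox E1 X)) := by
        rw [sol_iff]
        intro w
        apply Set.Subset.antisymm
        · intro z hz
          obtain ⟨y', h1, h2⟩ := mem_upper.mp hz
          exact mem_upper.mpr ⟨y', h1.1, h2⟩
        · intro z hz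
          obtain ⟨y, hzy, hwy⟩ := mem_upper.mp hz
          by_cases hzC : z ∈ {w | E1.r x w}
          · have hyC : y ∈ {w | E1.r x w} := E1.iseqv.trans hzC hzy
            by_cases hzA : z ∈ A
            · obtain ⟨a, haA, hya⟩ := hAex y hyC
              refine mem_upper.mpr ⟨a, ⟨?_, ?_⟩, E2.iseqv.trans hwy hya⟩
              · exact E1.iseqv.trans (E1.iseqv.symm hzC) (hAC haA)
              · exact ⟨fun _ => haA, fun _ => hzA⟩
            · obtain ⟨b, hbC, hbA, hyb⟩ := hBex y hyC
              refine mem_upper.mpr ⟨b, ⟨?_, ?_⟩, E2.iseqv.trans hwy hyb⟩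
              · exact E1.iseqv.trans (E1.iseqv.symm hzC) hbC
              · exact ⟨fun h => absurd h hzA, fun h => absurd h hbA⟩
          · refine mem_upper.mpr ⟨y, ⟨hzy, ?_⟩, hwy⟩
            have hzA : z ∉ A := fun h => hzC (hAC h)
            have hyA : y ∉ A := fun h => hzC (E1.iseqv.trans (hAC h) (E1.iseqv.symm hzy))
            exact ⟨fun h => absurd h hzA, fun h => absurd h hyA⟩
      have hE := (huniq E3' E2 hsol).1
      have hxC : x ∈ {w | E1.r x w} := E1.iseqv.refl x
      obtain ⟨a, haA, -⟩ := hAex x hxC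
      obtain ⟨b, hbC, hbA, -⟩ := hBex x hxC
      have hab : E1.r a b := E1.iseqv.trans (E1.iseqv.symm (hAC haA)) hbC
      have : E3'.r a b := by rw [hE]; exact hab
      exact hbA (this.2.mp haA)
  · rintro ⟨h1, h2, h3, h4⟩
    refine ⟨fun X => rfl, ?_⟩
    intro E3 E4 hsol
    have hS : ∀ x, upperApprox E3 {y | E4.r x y} = upperApprox E1 {y | E2.r x y} :=
      (sol_iff E1 E2 E3 E4).mp hsol
    have hS' : ∀ x, upperApprox E4 {y | E3.r x y} = upperApprox E2 {y | E1.r x y} := by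
      intro x
      ext z
      rw [transpose, hS z, transpose]
    have hE4le : ∀ a b, E4.r a b → E2.r a b := by
      intro a b hab
      by_contra hcon
      exact h1 a b hcon (by rw [← hS a, ← hS b, cls_eq E4 hab])
    have hE3le : ∀ a b, E3.r a b → E1.r a b := by
      intro a b hab
      by_contra hcon
      exact h2 a b hcon (by rw [← hS' a, ← hS' b, cls_eq E3 hab])
    have hE2le : ∀ u v, E2.r u v → E4.r u v := by
      intro u v huv
      obtain ⟨z, a, hza⟩ := h3 u
      have ha : a ∈ {w | E2.r u w} ∩ {w | E1.r z w} := by rw [hza]; rfl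
      have key : ∀ w, E2.r u w → E4.r w a := by
        intro w huw
        have hz : z ∈ upperApprox E1 {y | E2.r u y} :=
          mem_upper.mpr ⟨a, ha.2, ha.1⟩
        rw [cls_eq E2 huw, ← hS w] at hz
        obtain ⟨y, hzy, hwy⟩ := mem_upper.mp hz
        have hy : y ∈ {w | E2.r u w} ∩ {w | E1.r z w} :=
          ⟨E2.iseqv.trans huw (hE4le _ _ hwy), hE3le _ _ hzy⟩
        rw [hza] at hy
        exact hy ▸ hwy
      exact E4.iseqv.trans (key u (E2.iseqv.refl u)) (E4.iseqv.symm (key v huv))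
    have hE1le : ∀ u v, E1.r u v → E3.r u v := by
      intro u v huv
      obtain ⟨z, a, hza⟩ := h4 u
      have ha : a ∈ {w | E1.r u w} ∩ {w | E2.r z w} := by rw [hza]; rfl
      have key : ∀ w, E1.r u w → E3.r w a := by
        intro w huw
        have hz : z ∈ upperApprox E2 {y | E1.r u y} :=
          mem_upper.mpr ⟨a, ha.2, ha.1⟩
        rw [cls_eq E1 huw, ← hS' w] at hz
        obtain ⟨y, hzy, hwy⟩ := mem_upper.mp hz
        have hy : y ∈ {w | E1.r u w} ∩ {w | E2.r z w} :=
          ⟨E1.iseqv.trans huw (hE3le _ _ hwy), hE4le _ _ hzy⟩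
        rw [hza] at hy
        exact hy ▸ hwy
      exact E3.iseqv.trans (key u (E1.iseqv.refl u)) (E3.iseqv.symm (key v huv))
    constructor
    · exact Setoid.ext fun a b => ⟨fun h => hE3le a b h, fun h => hE1le a b h⟩
    · exact Setoid.ext fun a b => ⟨fun h => hE4le a b h, fun h => hE2le a b h⟩
end

section
/- Let E1 and E2 be equivalence relations on V and suppose (E1, E2) is the unique LL-solution of the operator F = l_{E2} ∘ l_{E1}. Then for every x ∈ V: if [x]_{E1} ⊇ [x]_{E2} then [x]_{E2} has exactly one element, and if [x]_{E2} ⊇ [x]_{E1} then [x]_{E1} has exactly one element. -/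
variable {V : Type*}

/-- Split the `E`-class of `x` into singletons, keep all other classes. -/
def splitS (E : Setoid V) (x : V) : Setoid V where
  r y z := y = z ∨ (E.r y z ∧ ¬ E.r x y)
  iseqv := by
    refine ⟨fun y => Or.inl rfl, ?_, ?_⟩
    · rintro y z (rfl | ⟨hyz, hxy⟩)
      · exact Or.inl rfl
      · exact Or.inr ⟨E.iseqv.symm hyz, fun hxz => hxy (E.iseqv.trans hxz (E.iseqv.symm hyz))⟩
    · rintro y z w (rfl | ⟨hyz, hxy⟩) h2
      · exact h2
      · rcases h2 with rfl | ⟨hzw, _⟩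
        · exact Or.inr ⟨hyz, hxy⟩
        · exact Or.inr ⟨E.iseqv.trans hyz hzw, hxy⟩

lemma splitS_r (E : Setoid V) (x y z : V) :
    (splitS E x).r y z ↔ (y = z ∨ (E.r y z ∧ ¬ E.r x y)) := Iff.rfl

lemma mem_lower (E : Setoid V) (X : Set V) (y : V) :
    y ∈ lowerApprox E X ↔ ∀ z, E.r y z → z ∈ X := Iff.rfl

lemma lower_saturated (E : Setoid V) (X : Set V) {y z : V} (hyz : E.r y z)
    (hy : y ∈ lowerApprox E X) : z ∈ lowerApprox E X := by
  intro w hw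
  exact hy (E.iseqv.trans hyz hw)

lemma classEq_of_split_eq (E : Setoid V) (x : V) (heq : splitS E x = E) :
    {w | E.r x w} = {x} := by
  ext w
  simp only [Set.mem_setOf_eq, Set.mem_singleton_iff]
  constructor
  · intro hw
    rw [← heq] at hw
    rcases (splitS_r E x x w).mp hw with rfl | ⟨_, hxx⟩
    · rfl
    · exact absurd (E.iseqv.refl x) hxx
  · intro hw; rw [hw]

lemma lemmaA (E1 E2 : Setoid V) (x : V) (hsub : ∀ w, E2.r x w → E1.r x w) :
    IsLLSolution E1 (splitS E2 x) (fun X => lowerApprox E2 (lowerApprox E1 X)) := by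
  intro X
  ext y
  rw [mem_lower, mem_lower]
  constructor
  · intro hy z hz
    rcases (splitS_r E2 x y z).mp hz with rfl | ⟨hz2, _⟩
    · exact hy y (E2.iseqv.refl y)
    · exact hy z hz2
  · intro hy z hz
    have hz' : E2.r y z := hz
    by_cases hxy : E2.r x y
    · have hyZ : y ∈ lowerApprox E1 X := hy y ((splitS_r E2 x y y).mpr (Or.inl rfl))
      have hxz : E1.r x z := hsub z (E2.iseqv.trans hxy hz')
      have hxy1 : E1.r x y := hsub y hxy
      exact lower_saturated E1 X (E1.iseqv.trans (E1.iseqv.symm hxy1) hxz) hyZ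
    · exact hy z ((splitS_r E2 x y z).mpr (Or.inr ⟨hz', hxy⟩))

lemma lemmaB (E1 E2 : Setoid V) (x : V) (hsub : ∀ w, E1.r x w → E2.r x w) :
    IsLLSolution (splitS E1 x) E2 (fun X => lowerApprox E2 (lowerApprox E1 X)) := by
  intro X
  ext y
  rw [mem_lower, mem_lower]
  constructor
  · intro hy z hz
    rw [mem_lower]
    intro w hzw
    rcases (splitS_r E1 x z w).mp hzw with rfl | ⟨hzw1, _⟩
    · exact (mem_lower _ _ _).mp (hy z hz) z (E1.iseqv.refl z)
    · exact (mem_lower _ _ _).mp (hy z hz) w hzw1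
  · intro hy z hz
    have hz' : E2.r y z := hz
    rw [mem_lower]
    intro w hzw
    have hzw' : E1.r z w := hzw
    by_cases hxz : E1.r x z
    · have hxw : E1.r x w := E1.iseqv.trans hxz hzw'
      have h2zw : E2.r y w :=
        E2.iseqv.trans hz' (E2.iseqv.trans (E2.iseqv.symm (hsub z hxz)) (hsub w hxw))
      exact (mem_lower _ _ _).mp (hy w h2zw) w ((splitS_r E1 x w w).mpr (Or.inl rfl))
    · exact (mem_lower _ _ _).mp (hy z hz') w ((splitS_r E1 x z w).mpr (Or.inr ⟨hzw', hxz⟩))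

theorem stmt_11 [Fintype V] [Nonempty V] (E1 E2 : Setoid V)
    (h : IsUniqueLLSolution E1 E2 (fun X => lowerApprox E2 (lowerApprox E1 X)))
    (x : V) :
    ({w | E2.r x w} ⊆ {w | E1.r x w} → ∃ a : V, {w | E2.r x w} = {a}) ∧
    ({w | E1.r x w} ⊆ {w | E2.r x w} → ∃ a : V, {w | E1.r x w} = {a}) := by
  constructor
  · intro hsub
    have hsol := lemmaA E1 E2 x (fun w hw => hsub hw)
    have heq := (h.2 E1 (splitS E2 x) hsol).2
    exact ⟨x, classEq_of_split_eq E2 x heq⟩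
  · intro hsub
    have hsol := lemmaB E1 E2 x (fun w hw => hsub hw)
    have heq := (h.2 (splitS E1 x) E2 hsol).1
    exact ⟨x, classEq_of_split_eq E1 x heq⟩
end

section
/- Let E1 and E2 be equivalence relations on V, suppose (E1, E2) is the unique LL-solution of the operator F = l_{E2} ∘ l_{E1}, and suppose E1 ≠ Id or E2 ≠ Id, where Id is the identity (equality) relation on V. Then ¬(E1 ≤ E2) and ¬(E2 ≤ E1). -/
variable {V : Type*}

def idSetoid : Setoid V := ⟨Eq, ⟨fun _ => rfl, Eq.symm, Eq.trans⟩⟩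

lemma lowerApprox_id (X : Set V) : lowerApprox (idSetoid : Setoid V) X = X := by
  ext x
  constructor
  · intro hx; exact hx rfl
  · intro hx y hy; cases hy; exact hx

lemma lowerApprox_comp_of_le {E1 E2 : Setoid V} (hle : ∀ x y : V, E1.r x y → E2.r x y)
    (X : Set V) : lowerApprox E2 (lowerApprox E1 X) = lowerApprox E2 X := by
  ext x
  constructor
  · intro hx y hy
    exact hx hy (E1.refl y)
  · intro hx y hy z hz
    exact hx (E2.trans hy (hle y z hz))

lemma lowerApprox_comp_of_ge {E1 E2 : Setoid V} (hle : ∀ x y : V, E2.r x y → E1.r x y)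
    (X : Set V) : lowerApprox E2 (lowerApprox E1 X) = lowerApprox E1 X := by
  ext x
  constructor
  · intro hx
    exact hx (E2.refl x)
  · intro hx y hy z hz
    exact hx (E1.trans (hle x y hy) hz)

lemma rel_of_eq_id {E : Setoid V} (hE : (idSetoid : Setoid V) = E) {x y : V}
    (hxy : E.r x y) : x = y := by
  rw [← hE] at hxy; exact hxy

theorem stmt_12 [Fintype V] [Nonempty V] (E1 E2 : Setoid V)
    (h : IsUniqueLLSolution E1 E2 (fun X => lowerApprox E2 (lowerApprox E1 X)))
    (hnid : (∃ x y : V, E1.r x y ∧ x ≠ y) ∨ (∃ x y : V, E2.r x y ∧ x ≠ y)) :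
    ¬ (∀ x y : V, E1.r x y → E2.r x y) ∧ ¬ (∀ x y : V, E2.r x y → E1.r x y) := by
  obtain ⟨hsol, huniq⟩ := h
  have key : (idSetoid : Setoid V) = E1 ∧ (idSetoid : Setoid V) = E2 →
      False := by
    rintro ⟨h1, h2⟩
    rcases hnid with ⟨x, y, hr, hne⟩ | ⟨x, y, hr, hne⟩
    · exact hne (rel_of_eq_id h1 hr)
    · exact hne (rel_of_eq_id h2 hr)
  constructor
  · intro hle
    have s1 : IsLLSolution (idSetoid : Setoid V) E2
        (fun X => lowerApprox E2 (lowerApprox E1 X)) := by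
      intro X
      simp only [lowerApprox_id, lowerApprox_comp_of_le hle]
    have s2 : IsLLSolution E2 (idSetoid : Setoid V)
        (fun X => lowerApprox E2 (lowerApprox E1 X)) := by
      intro X
      simp only [lowerApprox_id, lowerApprox_comp_of_le hle]
    obtain ⟨ha, -⟩ := huniq _ _ s1
    obtain ⟨-, hc⟩ := huniq _ _ s2
    exact key ⟨ha, hc⟩
  · intro hle
    have s1 : IsLLSolution (idSetoid : Setoid V) E1
        (fun X => lowerApprox E2 (lowerApprox E1 X)) := by
      intro X
      simp only [lowerApprox_id, lowerApprox_comp_of_ge hle]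
    have s2 : IsLLSolution E1 (idSetoid : Setoid V)
        (fun X => lowerApprox E2 (lowerApprox E1 X)) := by
      intro X
      simp only [lowerApprox_id, lowerApprox_comp_of_ge hle]
    obtain ⟨ha, -⟩ := huniq _ _ s1
    obtain ⟨-, hc⟩ := huniq _ _ s2
    exact key ⟨ha, hc⟩
end

section
/- Let E1 and E2 be equivalence relations on V and suppose (E1, E2) is the unique LL-solution of the operator F = l_{E2} ∘ l_{E1}. Then for every x ∈ V, the lower approximation l_{E2}([x]_{E1}) has at most one element, and the lower approximation l_{E1}([x]_{E2}) has at most one element. -/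
variable {V : Type*}

/-- The discrete equivalence relation. -/
def discreteS : Setoid V := ⟨Eq, ⟨fun _ => rfl, Eq.symm, Eq.trans⟩⟩

/-- The indiscrete equivalence relation. -/
def indiscreteS : Setoid V :=
  ⟨fun _ _ => True, ⟨fun _ => trivial, fun _ => trivial, fun _ _ => trivial⟩⟩

/-- Patch the setoid `E` on the set `A` using the relation of `R`. -/
def patchS (E R : Setoid V) (A : Set V) : Setoid V where
  r y z := (y ∈ A ∧ z ∈ A ∧ R.r y z) ∨ (y ∉ A ∧ z ∉ A ∧ E.r y z)
  iseqv := by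
    refine ⟨fun y => ?_, fun {y z} h => ?_, fun {y z w} h1 h2 => ?_⟩
    · by_cases h : y ∈ A
      · exact Or.inl ⟨h, h, R.refl y⟩
      · exact Or.inr ⟨h, h, E.refl y⟩
    · rcases h with ⟨h1, h2, h3⟩ | ⟨h1, h2, h3⟩
      · exact Or.inl ⟨h2, h1, R.symm h3⟩
      · exact Or.inr ⟨h2, h1, E.symm h3⟩
    · rcases h1 with ⟨a1, a2, a3⟩ | ⟨a1, a2, a3⟩ <;>
        rcases h2 with ⟨b1, b2, b3⟩ | ⟨b1, b2, b3⟩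
      · exact Or.inl ⟨a1, b2, R.trans a3 b3⟩
      · exact (b1 a2).elim
      · exact (a2 b1).elim
      · exact Or.inr ⟨a1, b2, E.trans a3 b3⟩

lemma mem_lower_iff_of_subset (E1 : Setoid V) (X : Set V) (x : V)
    {T : Set V} (hT : T.Nonempty) (hTx : ∀ t ∈ T, E1.r x t) :
    T ⊆ lowerApprox E1 X ↔ x ∈ lowerApprox E1 X := by
  constructor
  · intro h
    obtain ⟨t, ht⟩ := hT
    have hts : t ∈ lowerApprox E1 X := h ht
    intro w hw
    exact hts (E1.trans (E1.symm (hTx t ht)) hw)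
  · intro hx t ht w hw
    exact hx (E1.trans (hTx t ht) hw)

lemma outer_eq (E1 E2 R : Setoid V) (x : V) (X : Set V) :
    lowerApprox (patchS E2 R (lowerApprox E2 {w | E1.r x w})) (lowerApprox E1 X)
      = lowerApprox E2 (lowerApprox E1 X) := by
  set A := lowerApprox E2 {w | E1.r x w} with hA
  have hsat : ∀ y ∈ A, ∀ z, E2.r y z → z ∈ A :=
    fun y hy z hyz w hw => hy (E2.trans hyz hw)
  have hAx : ∀ y ∈ A, E1.r x y := fun y hy => hy (E2.refl y)
  ext y
  by_cases hy : y ∈ A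
  · have h1 := mem_lower_iff_of_subset E1 X x
      (T := {z | (patchS E2 R A).r y z}) ⟨y, (patchS E2 R A).refl y⟩ (by
        rintro t (⟨_, ht, _⟩ | ⟨hy', _, _⟩)
        · exact hAx t ht
        · exact absurd hy hy')
    have h2 := mem_lower_iff_of_subset E1 X x
      (T := {z | E2.r y z}) ⟨y, E2.refl y⟩ (fun t ht => hAx t (hsat y hy t ht))
    exact h1.trans h2.symm
  · constructor
    · intro hmem z hz
      by_cases hzA : z ∈ A
      · exact absurd (hsat z hzA y (E2.symm hz)) hy
      · exact hmem (Or.inr ⟨hy, hzA, hz⟩)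
    · intro hmem z hz
      rcases hz with ⟨hy', _, _⟩ | ⟨_, _, h3⟩
      · exact absurd hy' hy
      · exact hmem h3

lemma inner_eq (E1 E2 R : Setoid V) (x : V) (X : Set V) :
    lowerApprox E2 (lowerApprox (patchS E1 R (lowerApprox E1 {w | E2.r x w})) X)
      = lowerApprox E2 (lowerApprox E1 X) := by
  set A := lowerApprox E1 {w | E2.r x w} with hA
  set E1' := patchS E1 R A with hE1'
  have hsat : ∀ y ∈ A, ∀ z, E1.r y z → z ∈ A :=
    fun y hy z hyz w hw => hy (E1.trans hyz hw)
  have hAx : ∀ y ∈ A, E2.r x y := fun y hy => hy (E1.refl y)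
  have hout : ∀ w ∉ A, (w ∈ lowerApprox E1' X ↔ w ∈ lowerApprox E1 X) := by
    intro w hw
    constructor
    · intro hm v hv
      by_cases hvA : v ∈ A
      · exact absurd (hsat v hvA w (E1.symm hv)) hw
      · exact hm (Or.inr ⟨hw, hvA, hv⟩)
    · intro hm v hv
      rcases hv with ⟨h1, _, _⟩ | ⟨_, _, h3⟩
      · exact absurd h1 hw
      · exact hm h3
  have hin1 : (∀ w ∈ A, w ∈ lowerApprox E1' X) ↔ A ⊆ X := by
    constructor
    · intro hh a ha
      exact hh a ha (E1'.refl a)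
    · intro hh w hw v hv
      rcases hv with ⟨_, h2, _⟩ | ⟨h1, _, _⟩
      · exact hh h2
      · exact absurd hw h1
  have hin2 : (∀ w ∈ A, w ∈ lowerApprox E1 X) ↔ A ⊆ X := by
    constructor
    · intro hh a ha
      exact hh a ha (E1.refl a)
    · intro hh w hw v hv
      exact hh (hsat w hw v hv)
  ext z
  by_cases hz : E2.r z x
  · constructor
    · intro hm w hw
      by_cases hwA : w ∈ A
      · refine hin2.mpr (hin1.mp ?_) w hwA
        intro u hu
        exact hm (E2.trans hz (hAx u hu))
      · exact (hout w hwA).mp (hm hw)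
    · intro hm w hw
      by_cases hwA : w ∈ A
      · refine hin1.mpr (hin2.mp ?_) w hwA
        intro u hu
        exact hm (E2.trans hz (hAx u hu))
      · exact (hout w hwA).mpr (hm hw)
  · constructor
    · intro hm w hw
      have hwA : w ∉ A := fun hwA => hz (E2.trans hw (E2.symm (hAx w hwA)))
      exact (hout w hwA).mp (hm hw)
    · intro hm w hw
      have hwA : w ∉ A := fun hwA => hz (E2.trans hw (E2.symm (hAx w hwA)))
      exact (hout w hwA).mpr (hm hw)

theorem stmt_13 [Fintype V] [Nonempty V] (E1 E2 : Setoid V)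
    (h : IsUniqueLLSolution E1 E2 (fun X => lowerApprox E2 (lowerApprox E1 X)))
    (x : V) :
    (lowerApprox E2 {w | E1.r x w}).Subsingleton ∧
    (lowerApprox E1 {w | E2.r x w}).Subsingleton := by
  constructor
  · intro a ha b hb
    by_contra hne
    by_cases hr : E2.r a b
    · have hsol : IsLLSolution E1 (patchS E2 discreteS (lowerApprox E2 {w | E1.r x w}))
          (fun X => lowerApprox E2 (lowerApprox E1 X)) := by
        intro X
        exact (outer_eq E1 E2 discreteS x X).symm
      have heq := (h.2 _ _ hsol).2
      have hab : (patchS E2 discreteS (lowerApprox E2 {w | E1.r x w})).r a b := by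
        rw [heq]; exact hr
      rcases hab with ⟨_, _, h3⟩ | ⟨h1, _, _⟩
      · exact hne h3
      · exact h1 ha
    · have hsol : IsLLSolution E1 (patchS E2 indiscreteS (lowerApprox E2 {w | E1.r x w}))
          (fun X => lowerApprox E2 (lowerApprox E1 X)) := by
        intro X
        exact (outer_eq E1 E2 indiscreteS x X).symm
      have heq := (h.2 _ _ hsol).2
      have hab : (patchS E2 indiscreteS (lowerApprox E2 {w | E1.r x w})).r a b :=
        Or.inl ⟨ha, hb, trivial⟩
      rw [heq] at hab
      exact hr hab
  · intro a ha b hb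
    by_contra hne
    by_cases hr : E1.r a b
    · have hsol : IsLLSolution (patchS E1 discreteS (lowerApprox E1 {w | E2.r x w})) E2
          (fun X => lowerApprox E2 (lowerApprox E1 X)) := by
        intro X
        exact (inner_eq E1 E2 discreteS x X).symm
      have heq := (h.2 _ _ hsol).1
      have hab : (patchS E1 discreteS (lowerApprox E1 {w | E2.r x w})).r a b := by
        rw [heq]; exact hr
      rcases hab with ⟨_, _, h3⟩ | ⟨h1, _, _⟩
      · exact hne h3
      · exact h1 ha
    · have hsol : IsLLSolution (patchS E1 indiscreteS (lowerApprox E1 {w | E2.r x w})) E2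
          (fun X => lowerApprox E2 (lowerApprox E1 X)) := by
        intro X
        exact (inner_eq E1 E2 indiscreteS x X).symm
      have heq := (h.2 _ _ hsol).1
      have hab : (patchS E1 indiscreteS (lowerApprox E1 {w | E2.r x w})).r a b :=
        Or.inl ⟨ha, hb, trivial⟩
      rw [heq] at hab
      exact hr hab
end

section
/- Let E1 and E2 be equivalence relations on V and suppose (E1, E2) is the unique LL-solution of the operator F = l_{E2} ∘ l_{E1}. Then the number of singleton equivalence classes of E1 is at most the number of equivalence classes of E2, and the number of singleton equivalence classes of E2 is at most the number of equivalence classes of E1. -/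
variable {V : Type*}

lemma key1 (E1 E2 : Setoid V)
    (h : IsUniqueLLSolution E1 E2 (fun X => lowerApprox E2 (lowerApprox E1 X)))
    {x x' : V} (hx : {w | E1.r x w} = {x}) (hx' : {w | E1.r x' w} = {x'})
    (hE2 : E2.r x x') : x = x' := by
  have sx : ∀ w, E1.r x w → w = x := fun w hw => by
    have : w ∈ ({x} : Set V) := hx ▸ hw; exact this
  have sx' : ∀ w, E1.r x' w → w = x' := fun w hw => by
    have : w ∈ ({x'} : Set V) := hx' ▸ hw; exact this
  by_contra hne
  -- pull-back: E1.r a b with b ∈ {x,x'} forces a ∈ {x,x'}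
  have pull : ∀ a b, E1.r a b → (b = x ∨ b = x') → (a = x ∨ a = x') := by
    rintro a b hab (rfl | rfl)
    · exact Or.inl (sx a (E1.symm hab))
    · exact Or.inr (sx' a (E1.symm hab))
  let E3 : Setoid V :=
    ⟨fun a b => E1.r a b ∨ ((a = x ∨ a = x') ∧ (b = x ∨ b = x')), by
      constructor
      · intro a; exact Or.inl (E1.refl a)
      · rintro a b (hab | ⟨pa, pb⟩)
        · exact Or.inl (E1.symm hab)
        · exact Or.inr ⟨pb, pa⟩
      · rintro a b c (hab | ⟨pa, pb⟩) (hbc | ⟨pb', pc⟩)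
        · exact Or.inl (E1.trans hab hbc)
        · exact Or.inr ⟨pull a b hab pb', pc⟩
        · exact Or.inr ⟨pa, by
            rcases pb with rfl | rfl
            · rcases sx c hbc with rfl; exact Or.inl rfl
            · rcases sx' c hbc with rfl; exact Or.inr rfl⟩
        · exact Or.inr ⟨pa, pc⟩⟩
  have hE2' : ∀ b c : V, (b = x ∨ b = x') → (c = x ∨ c = x') → E2.r b c := by
    rintro b c (rfl | rfl) (rfl | rfl)
    · exact E2.refl _
    · exact hE2
    · exact E2.symm hE2
    · exact E2.refl _
  have hsol : IsLLSolution E3 E2 (fun X => lowerApprox E2 (lowerApprox E1 X)) := by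
    intro X
    ext a
    simp only [lowerApprox, Set.mem_setOf_eq, Set.subset_def]
    constructor
    · intro H b hb c hc
      rcases hc with hc | ⟨pb, pc⟩
      · exact H b hb c hc
      · exact H c (E2.trans hb (hE2' b c pb pc)) c (E1.refl c)
    · intro H b hb c hc
      exact H b hb c (Or.inl hc)
  have heq := (h.2 E3 E2 hsol).1
  have : E3.r x x' := Or.inr ⟨Or.inl rfl, Or.inr rfl⟩
  rw [heq] at this
  exact hne (sx x' this).symm

lemma key2 (E1 E2 : Setoid V)
    (h : IsUniqueLLSolution E1 E2 (fun X => lowerApprox E2 (lowerApprox E1 X)))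
    {x x' : V} (hx : {w | E2.r x w} = {x}) (hx' : {w | E2.r x' w} = {x'})
    (hE1 : E1.r x x') : x = x' := by
  have sx : ∀ w, E2.r x w → w = x := fun w hw => by
    have : w ∈ ({x} : Set V) := hx ▸ hw; exact this
  have sx' : ∀ w, E2.r x' w → w = x' := fun w hw => by
    have : w ∈ ({x'} : Set V) := hx' ▸ hw; exact this
  by_contra hne
  have pull : ∀ a b, E2.r a b → (b = x ∨ b = x') → (a = x ∨ a = x') := by
    rintro a b hab (rfl | rfl)
    · exact Or.inl (sx a (E2.symm hab))
    · exact Or.inr (sx' a (E2.symm hab))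
  let E4 : Setoid V :=
    ⟨fun a b => E2.r a b ∨ ((a = x ∨ a = x') ∧ (b = x ∨ b = x')), by
      constructor
      · intro a; exact Or.inl (E2.refl a)
      · rintro a b (hab | ⟨pa, pb⟩)
        · exact Or.inl (E2.symm hab)
        · exact Or.inr ⟨pb, pa⟩
      · rintro a b c (hab | ⟨pa, pb⟩) (hbc | ⟨pb', pc⟩)
        · exact Or.inl (E2.trans hab hbc)
        · exact Or.inr ⟨pull a b hab pb', pc⟩
        · exact Or.inr ⟨pa, by
            rcases pb with rfl | rfl
            · rcases sx c hbc with rfl; exact Or.inl rfl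
            · rcases sx' c hbc with rfl; exact Or.inr rfl⟩
        · exact Or.inr ⟨pa, pc⟩⟩
  have hE1' : ∀ b c : V, (b = x ∨ b = x') → (c = x ∨ c = x') → E1.r b c := by
    rintro b c (rfl | rfl) (rfl | rfl)
    · exact E1.refl _
    · exact hE1
    · exact E1.symm hE1
    · exact E1.refl _
  have hsol : IsLLSolution E1 E4 (fun X => lowerApprox E2 (lowerApprox E1 X)) := by
    intro X
    ext a
    simp only [lowerApprox, Set.mem_setOf_eq, Set.subset_def]
    constructor
    · intro H b hb c hc
      rcases hb with hb | ⟨pa, pb⟩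
      · exact H b hb c hc
      · exact H a (E2.refl a) c (E1.trans (hE1' a b pa pb) hc)
    · intro H b hb c hc
      exact H b (Or.inl hb) c hc
  have heq := (h.2 E1 E4 hsol).2
  have : E4.r x x' := Or.inr ⟨Or.inl rfl, Or.inr rfl⟩
  rw [heq] at this
  exact hne (sx x' this).symm

theorem stmt_15 [Fintype V] [Nonempty V] (E1 E2 : Setoid V)
    (h : IsUniqueLLSolution E1 E2 (fun X => lowerApprox E2 (lowerApprox E1 X))) :
    Nat.card {x : V // {w | E1.r x w} = {x}} ≤ Nat.card (Quotient E2) ∧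
    Nat.card {x : V // {w | E2.r x w} = {x}} ≤ Nat.card (Quotient E1) := by
  constructor
  · have inj : Function.Injective
        (fun p : {x : V // {w | E1.r x w} = {x}} => (Quotient.mk E2 p.1)) := by
      intro p q hpq
      exact Subtype.ext (key1 E1 E2 h p.2 q.2 (Quotient.exact hpq))
    exact Nat.card_le_card_of_injective _ inj
  · have inj : Function.Injective
        (fun p : {x : V // {w | E2.r x w} = {x}} => (Quotient.mk E1 p.1)) := by
      intro p q hpq
      exact Subtype.ext (key2 E1 E2 h p.2 q.2 (Quotient.exact hpq))
    exact Nat.card_le_card_of_injective _ inj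
end

section
/- Let E1 and E2 be equivalence relations on V and let x ∈ V. Then there exists z ∈ V such that [x]_{E1} ∩ [z]_{E2} has exactly one element if and only if there do not exist Y, Z ⊆ V with [x]_{E1} = Y ∪ Z, Y ∩ Z = ∅, and u_{E2}(Y) = u_{E2}(Z) = u_{E2}([x]_{E1}). -/
variable {V : Type*}

theorem stmt_16 [Fintype V] [Nonempty V] (E1 E2 : Setoid V) (x : V) :
    (∃ z : V, ∃ a : V, {w | E1.r x w} ∩ {w | E2.r z w} = {a}) ↔
      ¬ ∃ Y Z : Set V, {w | E1.r x w} = Y ∪ Z ∧ Y ∩ Z = ∅ ∧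
        upperApprox E2 Y = upperApprox E2 Z ∧
        upperApprox E2 Z = upperApprox E2 {w | E1.r x w} := by
  classical
  constructor
  · rintro ⟨z, a, hza⟩ ⟨Y, Z, hYZ, hdisj, hUY, hUZ⟩
    have ha : a ∈ {w | E1.r x w} ∩ {w | E2.r z w} := hza ▸ rfl
    have hax : E1.r x a := ha.1
    have haz : E2.r z a := ha.2
    have key : ∀ W : Set V, W ⊆ {w | E1.r x w} →
        upperApprox E2 W = upperApprox E2 {w | E1.r x w} → a ∈ W := by
      intro W hWsub hW
      have haU : a ∈ upperApprox E2 {w | E1.r x w} := ⟨a, E2.iseqv.refl a, hax⟩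
      rw [← hW] at haU
      obtain ⟨b, hab, hbW⟩ := haU
      have hb : b ∈ ({a} : Set V) := by
        rw [← hza]
        exact ⟨hWsub hbW, E2.iseqv.trans haz hab⟩
      rw [Set.mem_singleton_iff] at hb
      rwa [hb] at hbW
    have hYsub : Y ⊆ {w | E1.r x w} := by rw [hYZ]; exact Set.subset_union_left
    have hZsub : Z ⊆ {w | E1.r x w} := by rw [hYZ]; exact Set.subset_union_right
    have haY : a ∈ Y := key Y hYsub (hUY.trans hUZ)
    have haZ : a ∈ Z := key Z hZsub hUZ
    exact absurd (Set.mem_inter haY haZ) (by rw [hdisj]; exact Set.notMem_empty a)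
  · intro hno
    by_contra hns
    push_neg at hns
    apply hno
    set B : V → Set V := fun w => {w' | E1.r x w'} ∩ {y | E2.r w y} with hB
    let rep : V → V := fun w => if h : (B w).Nonempty then h.choose else x
    have hrep_mem : ∀ w, (B w).Nonempty → rep w ∈ B w := by
      intro w h
      simp only [rep, dif_pos h]
      exact h.choose_spec
    have hBeq : ∀ w w', E2.r w w' → B w = B w' := by
      intro w w' h
      have hcls : {y | E2.r w y} = {y | E2.r w' y} := by
        ext y
        exact ⟨fun hy => E2.iseqv.trans (E2.iseqv.symm h) hy,
          fun hy => E2.iseqv.trans h hy⟩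
      simp only [hB, hcls]
    have hrep_eq : ∀ w w', E2.r w w' → rep w = rep w' := by
      intro w w' h
      simp only [rep, hBeq w w' h]
    have hUfull : ∀ W : Set V, W ⊆ {w | E1.r x w} →
        (∀ v w, E2.r v w → E1.r x w → ∃ b, E2.r v b ∧ b ∈ W) →
        upperApprox E2 W = upperApprox E2 {w | E1.r x w} := by
      intro W hsub hcov
      ext v
      constructor
      · rintro ⟨b, hvb, hbW⟩
        exact ⟨b, hvb, hsub hbW⟩
      · rintro ⟨w, hvw, hw⟩
        obtain ⟨b, hvb, hbW⟩ := hcov v w hvw hw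
        exact ⟨b, hvb, hbW⟩
    have hY : upperApprox E2 {w | E1.r x w ∧ rep w = w} = upperApprox E2 {w | E1.r x w} := by
      apply hUfull _ (fun w hw => hw.1)
      intro v w hvw hw
      have hne : (B w).Nonempty := ⟨w, hw, E2.iseqv.refl w⟩
      have hr := hrep_mem w hne
      exact ⟨rep w, E2.iseqv.trans hvw hr.2, hr.1, (hrep_eq w (rep w) hr.2).symm⟩
    have hZ : upperApprox E2 {w | E1.r x w ∧ rep w ≠ w} = upperApprox E2 {w | E1.r x w} := by
      apply hUfull _ (fun w hw => hw.1)
      intro v w hvw hw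
      have hne : (B w).Nonempty := ⟨w, hw, E2.iseqv.refl w⟩
      have hex : ∃ b ∈ B w, b ≠ rep w := by
        by_contra hc
        push_neg at hc
        apply hns w (rep w)
        show B w = {rep w}
        ext b
        simp only [Set.mem_singleton_iff]
        exact ⟨fun hb => hc b hb, fun hb => hb ▸ hrep_mem w hne⟩
      obtain ⟨b, hb, hbne⟩ := hex
      refine ⟨b, E2.iseqv.trans hvw hb.2, hb.1, fun h => hbne ?_⟩
      rw [← h]
      exact (hrep_eq w b hb.2).symm
    refine ⟨{w | E1.r x w ∧ rep w = w}, {w | E1.r x w ∧ rep w ≠ w}, ?_, ?_,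
      hY.trans hZ.symm, hZ⟩
    · ext w
      simp only [Set.mem_union, Set.mem_setOf_eq]
      tauto
    · ext w
      simp only [Set.mem_inter_iff, Set.mem_setOf_eq, Set.mem_empty_iff_false]
      tauto
end

section
/- Let E1 and E2 be equivalence relations on V and let F = u_{E2} ∘ l_{E1}, so that (E1, E2) is a UL-solution of F. Then (E1, E2) is the unique UL-solution of F if and only if both of the following hold: (i) for all x, y ∈ V with ¬(x E2 y), u_{E1}([x]_{E2}) ≠ u_{E1}([y]_{E2}); (ii) for every x ∈ V there exists z ∈ V such that [x]_{E2} ∩ [z]_{E1} has exactly one element. -/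
variable {V : Type*}

namespace ULAux

lemma mem_upper {E : Setoid V} {Y : Set V} {x : V} :
    x ∈ upperApprox E Y ↔ ∃ y, E.r x y ∧ y ∈ Y := by
  constructor
  · rintro ⟨y, hy1, hy2⟩; exact ⟨y, hy1, hy2⟩
  · rintro ⟨y, h1, h2⟩; exact ⟨y, h1, h2⟩

lemma mem_lower {E : Setoid V} {X : Set V} {x : V} :
    x ∈ lowerApprox E X ↔ ∀ y, E.r x y → y ∈ X := Iff.rfl

lemma classEq {E : Setoid V} {a b : V} (h : E.r a b) :
    {y | E.r a y} = {y | E.r b y} :=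
  Set.ext fun _ => ⟨fun h' => E.trans (E.symm h) h', fun h' => E.trans h h'⟩

lemma lower_sat (E : Setoid V) (X : Set V) {a b : V} (h : E.r a b)
    (ha : a ∈ lowerApprox E X) : b ∈ lowerApprox E X :=
  fun _ hy => ha (E.trans h hy)

lemma mem_upper_sat {E1 E : Setoid V} {Y : Set V}
    (hY : ∀ a b, E1.r a b → a ∈ Y → b ∈ Y) {x : V} :
    x ∈ upperApprox E Y ↔ (Y ∩ upperApprox E1 {w | E.r x w}).Nonempty := by
  rw [mem_upper]
  constructor
  · rintro ⟨y, h1, h2⟩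
    exact ⟨y, h2, ⟨y, E1.refl y, h1⟩⟩
  · rintro ⟨z, hz, hz2⟩
    obtain ⟨v, hv1, hv2⟩ := mem_upper.mp hz2
    exact ⟨v, hv2, hY z v hv1 hz⟩

lemma star_forward {E1 E2 E4 : Setoid V}
    (h : ∀ x, upperApprox E1 {z | E4.r x z} = upperApprox E1 {z | E2.r x z}) :
    IsULSolution E1 E4 (fun X => upperApprox E2 (lowerApprox E1 X)) := by
  intro X
  ext x
  rw [mem_upper_sat (fun a b hab => lower_sat E1 X hab),
      mem_upper_sat (fun a b hab => lower_sat E1 X hab), h x]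

lemma star_back_sub {E1 A B : Setoid V}
    (h : ∀ X, upperApprox A (lowerApprox E1 X) = upperApprox B (lowerApprox E1 X))
    {x z : V} (hz : z ∈ upperApprox E1 {w | A.r x w}) :
    z ∈ upperApprox E1 {w | B.r x w} := by
  obtain ⟨c, hzc, hxc⟩ := mem_upper.mp hz
  have hY : lowerApprox E1 {w | E1.r z w} = {w | E1.r z w} := by
    ext a
    constructor
    · intro ha; exact ha (E1.refl a)
    · intro ha b hb; exact E1.trans ha hb
  have hxA : x ∈ upperApprox A (lowerApprox E1 {w | E1.r z w}) := by
    rw [hY]; exact mem_upper.mpr ⟨c, hxc, hzc⟩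
  have hxB := (h {w | E1.r z w}) ▸ hxA
  rw [hY] at hxB
  obtain ⟨v, hxv, hzv⟩ := mem_upper.mp hxB
  exact mem_upper.mpr ⟨v, hzv, hxv⟩

lemma star_backward {E1 E2 E4 : Setoid V}
    (h : ∀ X, upperApprox E2 (lowerApprox E1 X) = upperApprox E4 (lowerApprox E1 X))
    (x : V) :
    upperApprox E1 {z | E4.r x z} = upperApprox E1 {z | E2.r x z} := by
  ext z
  exact ⟨fun hz => star_back_sub (fun X => (h X).symm) hz, fun hz => star_back_sub h hz⟩

lemma upper_nonempty_iff {E : Setoid V} {Y : Set V} :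
    (upperApprox E Y).Nonempty ↔ Y.Nonempty := by
  constructor
  · rintro ⟨x, hx⟩
    obtain ⟨y, _, hy⟩ := mem_upper.mp hx
    exact ⟨y, hy⟩
  · rintro ⟨y, hy⟩
    exact ⟨y, mem_upper.mpr ⟨y, E.refl y, hy⟩⟩

lemma eq_E1 {E1 E2 E3 E4 : Setoid V}
    (h : ∀ X, upperApprox E4 (lowerApprox E3 X) = upperApprox E2 (lowerApprox E1 X)) :
    E3 = E1 := by
  have hiff : ∀ X : Set V, (lowerApprox E3 X).Nonempty ↔ (lowerApprox E1 X).Nonempty := by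
    intro X
    rw [← upper_nonempty_iff (E := E4), h X, upper_nonempty_iff]
  apply Setoid.ext
  intro x y
  obtain ⟨w, hw⟩ := (hiff {y | E1.r x y}).mpr ⟨x, fun _ h => h⟩
  obtain ⟨v, hv⟩ := (hiff {y | E3.r w y}).mp ⟨w, fun _ h => h⟩
  have hwv : E3.r w v := hv (E1.refl v)
  have hxv : E1.r x v := hw hwv
  have hsub : ∀ u, E1.r x u → E3.r w u := fun u hu =>
    hv (E1.trans (E1.symm hxv) hu)
  have hwx : E3.r w x := hsub x (E1.refl x)
  constructor
  · intro hxy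
    exact hw (E3.trans hwx hxy)
  · intro hxy
    exact E3.trans (E3.symm hwx) (hsub y hxy)



lemma exists_ne_of_ne_singleton {S : Set V} {a : V} (ha : a ∈ S) (h : S ≠ {a}) :
    ∃ b ∈ S, b ≠ a := by
  by_contra hb
  push_neg at hb
  exact h (Set.ext fun b => ⟨fun hbS => hb b hbS, fun hba => by
    simp only [Set.mem_singleton_iff] at hba; exact hba ▸ ha⟩)

lemma split_lemma (E1 E2 : Setoid V) (x : V) (f : V → V)
    (hfmem : ∀ d, ({w | E2.r x w} ∩ {w | E1.r d w}).Nonempty →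
      f d ∈ {w | E2.r x w} ∩ {w | E1.r d w})
    (hfcongr : ∀ d d', E1.r d d' → f d = f d')
    (hx : ∀ z a, {w | E2.r x w} ∩ {w | E1.r z w} ≠ {a}) :
    ∃ E4 : Setoid V,
      (∀ w, upperApprox E1 {z | E4.r w z} = upperApprox E1 {z | E2.r w z}) ∧ E4 ≠ E2 := by
  classical
  set P : V → Prop := fun a => E2.r x a ∧ f a = a with hP
  have hPf : ∀ d, ({w | E2.r x w} ∩ {w | E1.r d w}).Nonempty → P (f d) := by
    intro d hne
    exact ⟨(hfmem d hne).1, hfcongr (f d) d (E1.symm (hfmem d hne).2)⟩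
  have hPb : ∀ d b, b ∈ ({w | E2.r x w} ∩ {w | E1.r d w}) → b ≠ f d → ¬ P b := by
    intro d b hb hbne hPb
    exact hbne (hPb.2 ▸ hfcongr b d (E1.symm hb.2))
  refine ⟨⟨fun a b => E2.r a b ∧ (P a ↔ P b),
    ⟨fun a => ⟨E2.refl a, Iff.rfl⟩,
     fun h => ⟨E2.symm h.1, h.2.symm⟩,
     fun h h' => ⟨E2.trans h.1 h'.1, h.2.trans h'.2⟩⟩⟩, ?_, ?_⟩
  · intro w
    ext z
    rw [mem_upper, mem_upper]
    constructor
    · rintro ⟨v, hzv, hwv, -⟩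
      exact ⟨v, hzv, hwv⟩
    · rintro ⟨c, hzc, hwc⟩
      by_cases hxw : E2.r x w
      · have hxc : E2.r x c := E2.trans hxw hwc
        have hne : ({w' | E2.r x w'} ∩ {w' | E1.r c w'}).Nonempty := ⟨c, hxc, E1.refl c⟩
        by_cases hPw : P w
        · refine ⟨f c, E1.trans hzc (hfmem c hne).2, ?_, ?_⟩
          · exact E2.trans (E2.symm hxw) (hfmem c hne).1
          · exact iff_of_true hPw (hPf c hne)
        · obtain ⟨b, hb, hbne⟩ := exists_ne_of_ne_singleton (hfmem c hne) (hx c (f c))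
          refine ⟨b, E1.trans hzc hb.2, ?_, ?_⟩
          · exact E2.trans (E2.symm hxw) hb.1
          · exact iff_of_false hPw (hPb c b hb hbne)
      · have hPw : ¬ P w := fun h => hxw h.1
        have hPc : ¬ P c := fun h => hxw (E2.trans h.1 (E2.symm hwc))
        exact ⟨c, hzc, hwc, iff_of_false hPw hPc⟩
  · intro heq
    rw [Setoid.ext_iff] at heq
    have hne0 : ({w | E2.r x w} ∩ {w | E1.r x w}).Nonempty := ⟨x, E2.refl x, E1.refl x⟩
    obtain ⟨b, hb, hbne⟩ := exists_ne_of_ne_singleton (hfmem x hne0) (hx x (f x))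
    have hE2 : E2.r (f x) b := E2.trans (E2.symm (hfmem x hne0).1) hb.1
    have h4 := (heq (f x) b).mpr hE2
    exact hPb x b hb hbne (h4.2.mp (hPf x hne0))

noncomputable def pick [Nonempty V] (S : Set V) : V :=
  @dite _ S.Nonempty (Classical.dec _) (fun h => h.some) (fun _ => Classical.arbitrary V)

lemma pick_mem [Nonempty V] {S : Set V} (h : S.Nonempty) : pick S ∈ S := by
  unfold pick
  rw [dif_pos h]
  exact h.some_mem

end ULAux

theorem stmt_18 [Fintype V] [Nonempty V] (E1 E2 : Setoid V) :
    IsUniqueULSolution E1 E2 (fun X => upperApprox E2 (lowerApprox E1 X)) ↔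
      ((∀ x y : V, ¬ E2.r x y →
          upperApprox E1 {z | E2.r x z} ≠ upperApprox E1 {z | E2.r y z}) ∧
       (∀ x : V, ∃ z : V, ∃ a : V, {w | E2.r x w} ∩ {w | E1.r z w} = {a})) := by
  constructor
  · -- uniqueness → (i) ∧ (ii)
    rintro ⟨-, huniq⟩
    constructor
    · -- (i)
      intro x y hxy hS
      -- coarsen E2 by "same upper image"
      set E4 : Setoid V := ⟨fun a b =>
          upperApprox E1 {z | E2.r a z} = upperApprox E1 {z | E2.r b z},
        ⟨fun _ => rfl, fun h => h.symm, fun h h' => h.trans h'⟩⟩ with hE4def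
      have hstar : ∀ w, upperApprox E1 {z | E4.r w z} = upperApprox E1 {z | E2.r w z} := by
        intro w
        ext z
        rw [ULAux.mem_upper, ULAux.mem_upper]
        constructor
        · rintro ⟨c, hzc, hc⟩
          have hzSc : z ∈ upperApprox E1 {z' | E2.r c z'} :=
            ULAux.mem_upper.mpr ⟨c, hzc, E2.refl c⟩
          have : z ∈ upperApprox E1 {z' | E2.r w z'} := by
            rw [show upperApprox E1 {z' | E2.r w z'} = upperApprox E1 {z' | E2.r c z'} from hc]
            exact hzSc
          obtain ⟨v, hv1, hv2⟩ := ULAux.mem_upper.mp this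
          exact ⟨v, hv1, hv2⟩
        · rintro ⟨c, hzc, hwc⟩
          exact ⟨c, hzc, show upperApprox E1 {z' | E2.r w z'} = upperApprox E1 {z' | E2.r c z'}
            by rw [ULAux.classEq hwc]⟩
      have heq : E4 = E2 := (huniq E1 E4 (ULAux.star_forward hstar)).2
      rw [Setoid.ext_iff] at heq
      exact hxy ((heq x y).mp hS)
    · -- (ii)
      intro x
      by_contra hc
      push_neg at hc
      obtain ⟨E4, hstar, hne⟩ := ULAux.split_lemma E1 E2 x
        (fun d => ULAux.pick ({w | E2.r x w} ∩ {w | E1.r d w}))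
        (fun d hd => ULAux.pick_mem hd)
        (fun d d' hdd => show ULAux.pick ({w | E2.r x w} ∩ {w | E1.r d w}) =
            ULAux.pick ({w | E2.r x w} ∩ {w | E1.r d' w}) by rw [ULAux.classEq hdd])
        hc
      exact hne (huniq E1 E4 (ULAux.star_forward hstar)).2
  · -- (i) ∧ (ii) → uniqueness
    rintro ⟨hi, hii⟩
    refine ⟨fun X => rfl, ?_⟩
    intro E3 E4 hsol
    have hE3 : E3 = E1 := ULAux.eq_E1 (fun X => (hsol X).symm)
    rw [hE3] at hsol
    refine ⟨hE3, ?_⟩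
    have hstar : ∀ w, upperApprox E1 {z | E4.r w z} = upperApprox E1 {z | E2.r w z} :=
      ULAux.star_backward (fun X => hsol X)
    have hrefine : ∀ a b, E4.r a b → E2.r a b := by
      intro a b hab
      by_contra hne2
      apply hi a b hne2
      rw [← hstar a, ← hstar b, ULAux.classEq hab]
    apply Setoid.ext
    intro a b
    constructor
    · exact hrefine a b
    · intro hab
      obtain ⟨z, c, hzc⟩ := hii a
      have hc : c ∈ ({w | E2.r a w} ∩ {w | E1.r z w}) := by
        rw [hzc]; exact rfl
      have hkey : ∀ y, E2.r a y → E4.r y c := by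
        intro y hay
        have hzS : z ∈ upperApprox E1 {w | E2.r y w} :=
          ULAux.mem_upper.mpr ⟨c, hc.2, E2.trans (E2.symm hay) hc.1⟩
        rw [← hstar y] at hzS
        obtain ⟨v, hzv, hyv⟩ := ULAux.mem_upper.mp hzS
        have hv : v ∈ ({w | E2.r a w} ∩ {w | E1.r z w}) :=
          ⟨E2.trans hay (hrefine _ _ hyv), hzv⟩
        rw [hzc] at hv
        exact hv ▸ hyv
      exact E4.trans (hkey a (E2.refl a)) (E4.symm (hkey b hab))
end
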